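/- Let G be a finite abelian group with invariant factors f₁ | f₂ | ⋯ | f_v. If G contains a subgroup isomorphic to (ℤ/ηℤ)^l, then η divides f_i for every i > v - l. -/

import Mathlib

open AddSubgroup Function

/-- The `n`-torsion subgroup. -/
def tors (n : ℕ) (A : Type) [AddCommGroup A] : AddSubgroup A where
  carrier := {x | n • x = 0}
  zero_mem' := by simp
  add_mem' := by
    intro a b ha hb
    simp only [Set.mem_setOf_eq] at *
    rw [smul_add, ha, hb, add_zero]
  neg_mem' := by
    intro a ha
    simp only [Set.mem_setOf_eq] at *
    rw [smul_neg, ha, neg_zero]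

lemma mem_tors {n : ℕ} {A : Type} [AddCommGroup A] {x : A} : x ∈ tors n A ↔ n • x = 0 := Iff.rfl

lemma card_tors_congr {A B : Type} [AddCommGroup A] [AddCommGroup B] (e : A ≃+ B) (n : ℕ) :
    Nat.card (tors n A) = Nat.card (tors n B) := by
  refine Nat.card_congr ⟨fun x => ⟨e x.1, ?_⟩, fun y => ⟨e.symm y.1, ?_⟩, fun x => by simp, fun y => by simp⟩
  · rw [mem_tors, ← map_nsmul, x.2, map_zero]
  · rw [mem_tors, ← map_nsmul, y.2, map_zero]

lemma card_tors_pi {ι : Type} [Fintype ι] (M : ι → Type) [∀ i, AddCommGroup (M i)] (n : ℕ) :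
    Nat.card (tors n ((i : ι) → M i)) = ∏ i, Nat.card (tors n (M i)) := by
  rw [← Nat.card_pi]
  refine Nat.card_congr ⟨fun x i => ⟨x.1 i, ?_⟩, fun y => ⟨fun i => (y i).1, ?_⟩,
    fun x => rfl, fun y => rfl⟩
  · exact congrFun x.2 i
  · exact funext fun i => (y i).2

lemma card_tors_zmod (m N : ℕ) (hN : 0 < N) : Nat.card (tors m (ZMod N)) = Nat.gcd m N := by
  haveI : NeZero N := ⟨hN.ne'⟩
  have hker : tors m (ZMod N) = AddMonoidHom.ker (AddMonoidHom.mulLeft (m : ZMod N)) := by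
    ext x
    simp [mem_tors, AddMonoidHom.mem_ker, AddMonoidHom.coe_mulLeft, nsmul_eq_mul]
  have hrange : (AddMonoidHom.mulLeft (m : ZMod N)).range = AddSubgroup.zmultiples (m : ZMod N) := by
    ext y
    simp only [AddMonoidHom.mem_range, AddMonoidHom.coe_mulLeft, AddSubgroup.mem_zmultiples_iff]
    constructor
    · rintro ⟨x, rfl⟩
      obtain ⟨k, rfl⟩ := ZMod.intCast_surjective x
      exact ⟨k, by rw [zsmul_eq_mul, mul_comm]⟩
    · rintro ⟨k, rfl⟩
      exact ⟨(k : ZMod N), by rw [zsmul_eq_mul, mul_comm]⟩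
  have hlag := AddSubgroup.card_eq_card_quotient_mul_card_addSubgroup
    (AddMonoidHom.ker (AddMonoidHom.mulLeft (m : ZMod N)))
  have hq : Nat.card (ZMod N ⧸ AddMonoidHom.ker (AddMonoidHom.mulLeft (m : ZMod N)))
      = N / Nat.gcd N m := by
    rw [Nat.card_congr (QuotientAddGroup.quotientKerEquivRange _).toEquiv, hrange,
      Nat.card_zmultiples, ZMod.addOrderOf_coe m (NeZero.ne N)]
  rw [Nat.card_zmod, hq] at hlag
  rw [hker]
  have hg : Nat.gcd N m ∣ N := Nat.gcd_dvd_left N m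
  have hgpos : 0 < Nat.gcd N m := Nat.gcd_pos_of_pos_left m hN
  have hdivpos : 0 < N / Nat.gcd N m := Nat.div_pos (Nat.le_of_dvd hN hg) hgpos
  have : N / Nat.gcd N m * Nat.gcd N m = N := Nat.div_mul_cancel hg
  rw [Nat.gcd_comm]
  have h2 : N / Nat.gcd N m * Nat.gcd N m = N / Nat.gcd N m *
      Nat.card (AddMonoidHom.ker (AddMonoidHom.mulLeft (m : ZMod N))) :=
    this.trans hlag
  exact (Nat.eq_of_mul_eq_mul_left hdivpos h2).symm

lemma tors_le {n m : ℕ} {A : Type} [AddCommGroup A] (h : n ∣ m) : tors n A ≤ tors m A := by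
  intro x hx
  obtain ⟨c, rfl⟩ := h
  rw [mem_tors] at hx ⊢
  rw [mul_comm, mul_smul, hx, smul_zero]

lemma key_ineq {A B : Type} [AddCommGroup A] [AddCommGroup B] [Finite A] [Finite B]
    (ψ : A →+ B) (hψ : Function.Injective ψ) (n m : ℕ) (hnm : n ∣ m) :
    Nat.card (tors m A) * Nat.card (tors n B) ≤ Nat.card (tors m B) * Nat.card (tors n A) := by
  have hA : tors n A ≤ tors m A := tors_le hnm
  have hB : tors n B ≤ tors m B := tors_le hnm
  have hmap : ∀ x : A, x ∈ tors m A → ψ x ∈ tors m B := by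
    intro x hx
    rw [mem_tors] at hx ⊢
    rw [← map_nsmul, hx, map_zero]
  let ψ' : tors m A →+ tors m B :=
    { toFun := fun x => ⟨ψ x.1, hmap x.1 x.2⟩
      map_zero' := by ext; simp
      map_add' := by intro x y; ext; simp }
  let φ : tors m A →+ (tors m B) ⧸ ((tors n B).addSubgroupOf (tors m B)) :=
    (QuotientAddGroup.mk' _).comp ψ'
  have hker : φ.ker = (tors n A).addSubgroupOf (tors m A) := by
    ext x
    simp only [φ, AddMonoidHom.mem_ker, AddMonoidHom.comp_apply, QuotientAddGroup.mk'_apply,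
      QuotientAddGroup.eq_zero_iff, AddSubgroup.mem_addSubgroupOf]
    show ψ x.1 ∈ tors n B ↔ (x : A) ∈ tors n A
    rw [mem_tors, mem_tors, ← map_nsmul]
    exact ⟨fun h => hψ (by rw [h, map_zero]), fun h => by rw [h, map_zero]⟩
  have hcardkerA : Nat.card φ.ker = Nat.card (tors n A) := by
    rw [hker]
    exact Nat.card_congr (AddSubgroup.addSubgroupOfEquivOfLe hA).toEquiv
  have hcardB0 : Nat.card ((tors n B).addSubgroupOf (tors m B)) = Nat.card (tors n B) :=
    Nat.card_congr (AddSubgroup.addSubgroupOfEquivOfLe hB).toEquiv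
  have hlagA := AddSubgroup.card_eq_card_quotient_mul_card_addSubgroup φ.ker
  have hlagB := AddSubgroup.card_eq_card_quotient_mul_card_addSubgroup
    ((tors n B).addSubgroupOf (tors m B))
  have hq : Nat.card (tors m A ⧸ φ.ker)
      ≤ Nat.card ((tors m B) ⧸ ((tors n B).addSubgroupOf (tors m B))) :=
    Nat.card_le_card_of_injective _ (QuotientAddGroup.kerLift_injective φ)
  calc Nat.card (tors m A) * Nat.card (tors n B)
      = Nat.card (tors m A ⧸ φ.ker) * Nat.card (tors n A) * Nat.card (tors n B) := by
        rw [hlagA, hcardkerA]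
    _ ≤ Nat.card ((tors m B) ⧸ ((tors n B).addSubgroupOf (tors m B))) * Nat.card (tors n A)
        * Nat.card (tors n B) := by
        exact Nat.mul_le_mul_right _ (Nat.mul_le_mul_right _ hq)
    _ = Nat.card (tors m B) * Nat.card (tors n A) := by
        rw [hlagB, hcardB0]; ring

/-- Let `G` be a finite abelian group with invariant factors `f₁ ∣ f₂ ∣ ⋯ ∣ f_v`.
If `G` contains a subgroup isomorphic to `(ℤ/ηℤ)^l`, then `η ∣ f_i` for every
`i > v - l`. -/
theorem subgroup_power_divides_invariant_factors
    {G : Type} [AddCommGroup G] [Fintype G]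
    (v : ℕ) (f : Fin v → ℕ) (hpos : ∀ i, 0 < f i)
    (hchain : ∀ i j : Fin v, i ≤ j → f i ∣ f j)
    (hiso : Nonempty (G ≃+ ((i : Fin v) → ZMod (f i))))
    (η l : ℕ) (hη : 0 < η) (hl : l ≤ v)
    (hsub : ∃ H : AddSubgroup G, Nonempty (H ≃+ (Fin l → ZMod η))) :
    ∀ i : Fin v, v - l ≤ (i : ℕ) → η ∣ f i := by
  intro i hi
  by_contra hndvd
  obtain ⟨e⟩ := hiso
  obtain ⟨H, ⟨eH⟩⟩ := hsub
  haveI : NeZero η := ⟨hη.ne'⟩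
  haveI : ∀ j : Fin v, NeZero (f j) := fun j => ⟨(hpos j).ne'⟩
  have hfi : f i ≠ 0 := (hpos i).ne'
  have hl1 : 1 ≤ l := by
    have := i.isLt
    omega
  -- find a prime p with v_p(f i) < v_p(η)
  have hfac : ¬ η.factorization ≤ (f i).factorization := by
    rw [Nat.factorization_le_iff_dvd hη.ne' hfi]
    exact hndvd
  rw [Finsupp.le_def] at hfac
  push_neg at hfac
  obtain ⟨p, hp⟩ := hfac
  set b := (f i).factorization p with hb
  set a := η.factorization p with ha
  have hppr : p.Prime := by
    have : p ∈ η.factorization.support := by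
      rw [Finsupp.mem_support_iff]
      omega
    rw [Nat.support_factorization] at this
    exact Nat.prime_of_mem_primeFactors this
  have hdvdm : p ^ (b + 1) ∣ η :=
    (Nat.Prime.pow_dvd_iff_le_factorization hppr hη.ne').mpr (by omega)
  have hdvdn : p ^ b ∣ η := dvd_trans (pow_dvd_pow p (Nat.le_succ b)) hdvdm
  -- injective hom from (Fin l → ZMod η) to G
  let ψ : (Fin l → ZMod η) →+ G := H.subtype.comp eH.symm.toAddMonoidHom
  have hψ : Function.Injective ψ := H.subtype_injective.comp eH.symm.injective
  -- torsion cards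
  have cardA : ∀ k : ℕ, Nat.card (tors k (Fin l → ZMod η)) = Nat.gcd k η ^ l := by
    intro k
    rw [card_tors_pi]
    simp [card_tors_zmod k η hη]
  have cardG : ∀ k : ℕ, Nat.card (tors k G) = ∏ j, Nat.gcd k (f j) := by
    intro k
    rw [card_tors_congr e k, card_tors_pi]
    exact Finset.prod_congr rfl fun j _ => card_tors_zmod k (f j) (hpos j)
  have hkey := key_ineq ψ hψ (p ^ b) (p ^ (b + 1)) (pow_dvd_pow p (Nat.le_succ b))
  rw [cardA, cardA, cardG, cardG, Nat.gcd_eq_left hdvdm, Nat.gcd_eq_left hdvdn] at hkey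
  -- bound the product ∏ gcd(p^(b+1), f j)
  have hd1 : ∀ j : Fin v, Nat.gcd (p ^ (b + 1)) (f j) ∣ p * Nat.gcd (p ^ b) (f j) := by
    intro j
    obtain ⟨c, hc, hceq⟩ := (Nat.dvd_prime_pow hppr).mp (Nat.gcd_dvd_left (p ^ (b + 1)) (f j))
    have hcf : p ^ c ∣ f j := hceq ▸ Nat.gcd_dvd_right _ _
    rcases Nat.lt_or_ge c (b + 1) with h | h
    · rw [hceq]
      exact Dvd.dvd.mul_left (Nat.dvd_gcd (pow_dvd_pow p (by omega)) hcf) p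
    · have hc' : c = b + 1 := le_antisymm hc h
      subst hc'
      rw [hceq, pow_succ, mul_comm]
      exact Nat.mul_dvd_mul_left p
        (Nat.dvd_gcd dvd_rfl (dvd_trans (pow_dvd_pow p (Nat.le_succ b)) hcf))
  have hd2 : ∀ j : Fin v, (j : ℕ) ≤ (i : ℕ) → Nat.gcd (p ^ (b + 1)) (f j) = Nat.gcd (p ^ b) (f j) := by
    intro j hj
    apply Nat.dvd_antisymm
    · obtain ⟨c, hc, hceq⟩ := (Nat.dvd_prime_pow hppr).mp (Nat.gcd_dvd_left (p ^ (b + 1)) (f j))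
      have hcf : p ^ c ∣ f j := hceq ▸ Nat.gcd_dvd_right _ _
      have hcfi : p ^ c ∣ f i := dvd_trans hcf (hchain j i hj)
      have hcb : c ≤ b :=
        (Nat.Prime.pow_dvd_iff_le_factorization hppr hfi).mp hcfi
      rw [hceq]
      exact Nat.dvd_gcd (pow_dvd_pow p hcb) hcf
    · exact Nat.dvd_gcd
        (dvd_trans (Nat.gcd_dvd_left _ _) (pow_dvd_pow p (Nat.le_succ b)))
        (Nat.gcd_dvd_right _ _)
  have hprodd : (∏ j, Nat.gcd (p ^ (b + 1)) (f j)) ∣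
      p ^ (l - 1) * ∏ j, Nat.gcd (p ^ b) (f j) := by
    have step1 : (∏ j, Nat.gcd (p ^ (b + 1)) (f j)) ∣
        ∏ j : Fin v, (if (i : ℕ) < j.val then p else 1) * Nat.gcd (p ^ b) (f j) := by
      apply Finset.prod_dvd_prod_of_dvd
      intro j _
      by_cases hj : (i : ℕ) < (j : ℕ)
      · rw [if_pos hj]; exact hd1 j
      · rw [if_neg hj, one_mul, hd2 j (by omega)]
    have step2 : (∏ j : Fin v, (if (i : ℕ) < j.val then p else 1) * Nat.gcd (p ^ b) (f j)) =
        p ^ (Finset.univ.filter (fun j : Fin v => (i : ℕ) < j.val)).card *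
          ∏ j, Nat.gcd (p ^ b) (f j) := by
      rw [Finset.prod_mul_distrib, Finset.prod_ite, Finset.prod_const, Finset.prod_const,
        one_pow, mul_one]
    have hcardfil : (Finset.univ.filter (fun j : Fin v => (i : ℕ) < j.val)).card ≤ l - 1 := by
      have : Finset.univ.filter (fun j : Fin v => (i : ℕ) < j.val) = Finset.Ioi i := by
        ext j
        simp only [Finset.mem_filter, Finset.mem_univ, true_and, Finset.mem_Ioi, Fin.lt_def]
      rw [this, Fin.card_Ioi]
      have := i.isLt
      omega
    refine step1.trans ?_
    rw [step2]
    exact Nat.mul_dvd_mul_right (pow_dvd_pow p hcardfil) _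
  have hP : 0 < ∏ j, Nat.gcd (p ^ b) (f j) :=
    Finset.prod_pos fun j _ => Nat.gcd_pos_of_pos_right _ (hpos j)
  have hle : (p ^ (b + 1)) ^ l * ∏ j, Nat.gcd (p ^ b) (f j) ≤
      (p ^ (l - 1) * ∏ j, Nat.gcd (p ^ b) (f j)) * (p ^ b) ^ l :=
    le_trans hkey (Nat.mul_le_mul_right _ (Nat.le_of_dvd
      (Nat.mul_pos (pow_pos hppr.pos _) hP) hprodd))
  have hfin : p ^ ((b + 1) * l) ≤ p ^ (l - 1 + b * l) := by
    calc p ^ ((b + 1) * l) = (p ^ (b + 1)) ^ l := by rw [← pow_mul]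
      _ ≤ p ^ (l - 1) * (p ^ b) ^ l := by
          refine Nat.le_of_mul_le_mul_right ?_ hP
          calc (p ^ (b + 1)) ^ l * ∏ j, Nat.gcd (p ^ b) (f j)
              ≤ (p ^ (l - 1) * ∏ j, Nat.gcd (p ^ b) (f j)) * (p ^ b) ^ l := hle
            _ = p ^ (l - 1) * (p ^ b) ^ l * ∏ j, Nat.gcd (p ^ b) (f j) := by ring
      _ = p ^ (l - 1 + b * l) := by rw [← pow_mul, ← pow_add]
  have hexp := (Nat.pow_le_pow_iff_right hppr.one_lt).mp hfin
  rw [Nat.add_mul, one_mul] at hexp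
  omega
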